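/- Let q be an odd prime power. Then PGL(2,q) contains a dihedral subgroup of order 2(q+1). -/

import Mathlib

lemma exists_dihedral_subgroup {G : Type*} [Group G] {n : ℕ} (hn : n ≠ 0)
    (R S : G) (hR : orderOf R = n) (hS : S * S = 1)
    (hconj : S * R * S = R⁻¹) (hnot : ∀ k : ℕ, S ≠ R ^ k) :
    ∃ H : Subgroup G, Nonempty (H ≃* DihedralGroup n) := by
  haveI : NeZero n := ⟨hn⟩
  have hSinv : S⁻¹ = S := inv_eq_of_mul_eq_one_right hS
  have key : ∀ k : ℕ, S * R ^ k * S = (R ^ k)⁻¹ := by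
    intro k
    calc S * R ^ k * S = S * R ^ k * S⁻¹ := by rw [hSinv]
    _ = (S * R * S⁻¹) ^ k := (conj_pow).symm
    _ = (R⁻¹) ^ k := by rw [hSinv, hconj]
    _ = (R ^ k)⁻¹ := by rw [inv_pow]
  set rr : ZMod n → G := fun i => R ^ i.val with hrr
  have rr_add : ∀ i j : ZMod n, rr (i + j) = rr i * rr j := by
    intro i j
    simp only [hrr, ← pow_add]
    rw [pow_eq_pow_iff_modEq, hR, ZMod.val_add]
    exact Nat.mod_modEq _ _
  have rr_zero : rr 0 = 1 := by simp [hrr]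
  have rr_neg : ∀ i : ZMod n, rr (-i) = (rr i)⁻¹ := by
    intro i
    have : rr (-i) * rr i = 1 := by
      rw [← rr_add, neg_add_cancel, rr_zero]
    exact eq_inv_of_mul_eq_one_left this
  have rr_sub : ∀ i j : ZMod n, rr (j - i) = (rr i)⁻¹ * rr j := by
    intro i j
    rw [sub_eq_neg_add, rr_add, rr_neg]
  have key' : ∀ i : ZMod n, S * rr i * S = (rr i)⁻¹ := fun i => key i.val
  have swap : ∀ i : ZMod n, rr i * S = S * (rr i)⁻¹ := by
    intro i
    calc rr i * S = (S * S) * rr i * S := by rw [hS, one_mul]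
    _ = S * (S * rr i * S) := by group
    _ = S * (rr i)⁻¹ := by rw [key']
  let f : DihedralGroup n →* G :=
  { toFun := fun x => match x with
      | .r i => rr i
      | .sr i => S * rr i
    map_one' := rr_zero
    map_mul' := by
      rintro (i | i) (j | j)
      · show rr (i + j) = rr i * rr j
        exact rr_add i j
      · show S * rr (j - i) = rr i * (S * rr j)
        rw [rr_sub, ← mul_assoc, ← swap, mul_assoc]
      · show S * rr (i + j) = (S * rr i) * rr j
        rw [rr_add, mul_assoc]
      · show rr (j - i) = (S * rr i) * (S * rr j)
        symm
        calc (S * rr i) * (S * rr j) = S * (rr i * S) * rr j := by group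
        _ = S * (S * (rr i)⁻¹) * rr j := by rw [swap]
        _ = (S * S) * ((rr i)⁻¹ * rr j) := by group
        _ = rr (j - i) := by rw [hS, one_mul, rr_sub] }
  have hinj : Function.Injective f := by
    rw [injective_iff_map_eq_one]
    rintro (i | i) h
    · have h1 : R ^ i.val = 1 := h
      have hdvd : n ∣ i.val := by
        have h3 := orderOf_dvd_iff_pow_eq_one.mpr h1
        rwa [hR] at h3
      have hv : i = 0 := (ZMod.val_eq_zero i).mp
        (Nat.eq_zero_of_dvd_of_lt hdvd (ZMod.val_lt i))
      rw [hv, ← DihedralGroup.one_def]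
    · have hs : S = (rr i)⁻¹ := eq_inv_of_mul_eq_one_left h
      have h2 : R ^ i.val * R ^ (n - i.val) = 1 := by
        rw [← pow_add, Nat.add_sub_cancel' (le_of_lt (ZMod.val_lt i)), ← hR,
          pow_orderOf_eq_one]
      exact absurd (hs.trans (inv_eq_of_mul_eq_one_right h2)) (hnot (n - i.val))
  exact ⟨f.range, ⟨(MonoidHom.ofInjective hinj).symm⟩⟩

lemma center_map_equiv {G H : Type*} [Group G] [Group H] (e : G ≃* H) :
    (Subgroup.center G).map e.toMonoidHom = Subgroup.center H := by
  ext x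
  simp only [Subgroup.mem_map, Subgroup.mem_center_iff]
  constructor
  · rintro ⟨g, hg, rfl⟩ h
    have h1 := congrArg e (hg (e.symm h))
    simpa [map_mul] using h1
  · intro hx
    refine ⟨e.symm x, fun g => ?_, e.apply_symm_apply x⟩
    apply e.injective
    simpa [map_mul] using hx (e g)

set_option maxHeartbeats 1600000 in
theorem stmt16 (p e q : ℕ) (hp : p.Prime) (hodd : Odd q) (he : 0 < e) (hq : q = p ^ e)
    (F : Type*) [Field F] [Fintype F] (hF : Fintype.card F = q) :
    ∃ H : Subgroup (Matrix.GeneralLinearGroup (Fin 2) F ⧸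
        Subgroup.center (Matrix.GeneralLinearGroup (Fin 2) F)),
      Nonempty (↥H ≃* DihedralGroup (q + 1)) := by
  classical
  haveI : Fact p.Prime := ⟨hp⟩
  have hp2 : p ≠ 2 := by
    rintro rfl
    rw [Nat.odd_iff] at hodd
    have h2 : 2 ∣ q := by
      rw [hq]
      exact dvd_pow_self 2 he.ne'
    omega
  have hq1 : 1 < q := by
    rw [hq]
    calc 1 < p := hp.one_lt
    _ ≤ p ^ e := Nat.le_self_pow he.ne' p
  -- characteristic of F is p
  obtain ⟨n0, hrp, hcard0⟩ := FiniteField.card F (ringChar F)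
  have hrc : ringChar F = p := by
    have h1 : p ∣ ringChar F ^ (n0 : ℕ) := by
      rw [← hcard0, hF, hq]
      exact dvd_pow_self p he.ne'
    exact ((Nat.prime_dvd_prime_iff_eq hp hrp).mp (hp.dvd_of_dvd_pow h1)).symm
  haveI hFchar : CharP F p := hrc ▸ ringChar.charP F
  -- a nonsquare and quadratic extension K
  obtain ⟨a, ha⟩ := FiniteField.exists_nonsquare (F := F) (by rw [hrc]; exact hp2)
  have ha' : ∀ b : F, b ^ 2 ≠ a := fun b hb => ha ⟨b, by rw [← hb, sq]⟩
  have hirr : Irreducible (Polynomial.X ^ 2 - Polynomial.C a) :=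
    X_pow_sub_C_irreducible_of_prime Nat.prime_two ha'
  haveI : Fact (Irreducible (Polynomial.X ^ 2 - Polynomial.C a)) := ⟨hirr⟩
  set K := AdjoinRoot (Polynomial.X ^ 2 - Polynomial.C a) with hK
  have hf0 : (Polynomial.X ^ 2 - Polynomial.C a) ≠ 0 := hirr.ne_zero
  have hdim : (AdjoinRoot.powerBasis hf0).dim = 2 := by
    show (Polynomial.X ^ 2 - Polynomial.C a).natDegree = 2
    exact Polynomial.natDegree_X_pow_sub_C
  let b : Module.Basis (Fin 2) F K := (AdjoinRoot.powerBasis hf0).basis.reindex (finCongr hdim)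
  haveI : Fintype K := Module.fintypeOfFintype b
  have hcardK : Fintype.card K = q ^ 2 := by
    rw [Module.card_fintype b, hF, Fintype.card_fin]
  haveI : CharP K p := charP_of_injective_algebraMap (algebraMap F K).injective p
  -- the Frobenius x ↦ x ^ q as an F-algebra endomorphism
  have hcomm : ∀ c : F, iterateFrobenius K p e (algebraMap F K c) = algebraMap F K c := by
    intro c
    rw [iterateFrobenius_def, ← hq, ← map_pow, ← hF, FiniteField.pow_card]
  let σA : K →ₐ[F] K := { toRingHom := iterateFrobenius K p e, commutes' := hcomm }
  let σL : Module.End F K := σA.toLinearMap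
  have hσL : ∀ x : K, σL x = x ^ q := by
    intro x
    show iterateFrobenius K p e x = x ^ q
    rw [iterateFrobenius_def, ← hq]
  have hqq : ∀ x : K, (x ^ q) ^ q = x := by
    intro x
    rw [← pow_mul, show q * q = Fintype.card K by rw [hcardK, sq], FiniteField.pow_card]
  have hσ2 : σL * σL = 1 := by
    apply LinearMap.ext
    intro x
    rw [Module.End.mul_apply, hσL, hσL, hqq, Module.End.one_apply]
  let Sunit : (Module.End F K)ˣ := ⟨σL, σL, hσ2, hσ2⟩
  let φ : Kˣ →* (Module.End F K)ˣ :=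
    Units.map (Algebra.lmul F K).toRingHom.toMonoidHom
  have hφ : ∀ (u : Kˣ) (x : K),
      ((φ u : (Module.End F K)ˣ) : Module.End F K) x = (u : K) * x := fun u x => rfl
  -- generator of Kˣ
  obtain ⟨ζ, hζ⟩ := IsCyclic.exists_generator (α := Kˣ)
  have hζord : orderOf ζ = q ^ 2 - 1 := by
    rw [orderOf_eq_card_of_forall_mem_zpowers hζ, Nat.card_eq_fintype_card,
      Fintype.card_units, hcardK]
  -- fixed points of x ↦ x ^ q are exactly the image of F
  have hfix : ∀ x : K, x ^ q = x → ∃ c : F, algebraMap F K c = x := by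
    intro x hx
    have hPne : (Polynomial.X ^ q - Polynomial.X : Polynomial K) ≠ 0 :=
      FiniteField.X_pow_card_sub_X_ne_zero K hq1
    set T : Finset K := (Polynomial.X ^ q - Polynomial.X : Polynomial K).roots.toFinset with hT
    have hmem : ∀ y : K, y ^ q = y → y ∈ T := by
      intro y hy
      rw [hT, Multiset.mem_toFinset, Polynomial.mem_roots hPne]
      simp [Polynomial.IsRoot, sub_eq_zero, hy]
    have hTcard : T.card ≤ q := by
      calc T.card ≤ Multiset.card (Polynomial.X ^ q - Polynomial.X : Polynomial K).roots :=
        Multiset.toFinset_card_le _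
      _ ≤ (Polynomial.X ^ q - Polynomial.X : Polynomial K).natDegree :=
        Polynomial.card_roots' _
      _ = q := by
        rw [Polynomial.natDegree_sub_eq_left_of_natDegree_lt, Polynomial.natDegree_X_pow]
        rw [Polynomial.natDegree_X, Polynomial.natDegree_X_pow]
        exact hq1
    have himg : Finset.univ.image (algebraMap F K) ⊆ T := by
      intro y hy
      obtain ⟨c, _, rfl⟩ := Finset.mem_image.mp hy
      exact hmem _ (by rw [← map_pow, ← hF, FiniteField.pow_card])
    have hicard : (Finset.univ.image (algebraMap F K)).card = q := by
      rw [Finset.card_image_of_injective _ (algebraMap F K).injective,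
        Finset.card_univ, hF]
    have heq : Finset.univ.image (algebraMap F K) = T :=
      Finset.eq_of_subset_of_card_le himg (by rw [hicard]; exact hTcard)
    have hxT : x ∈ T := hmem x hx
    rw [← heq] at hxT
    obtain ⟨c, _, hc⟩ := Finset.mem_image.mp hxT
    exact ⟨c, hc⟩
  -- characterization of central units of End F K
  have hcenter : ∀ z : (Module.End F K)ˣ, z ∈ Subgroup.center (Module.End F K)ˣ →
      ∃ c : Kˣ, z = φ c ∧ (c : K) ^ q = (c : K) := by
    intro z hz
    rw [Subgroup.mem_center_iff] at hz
    have hzx : ∀ x : K, (z : Module.End F K) x = (z : Module.End F K) 1 * x := by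
      intro x
      rcases eq_or_ne x 0 with rfl | hx
      · simp
      · lift x to Kˣ using isUnit_iff_ne_zero.mpr hx
        have h1 := congrArg (fun w : (Module.End F K)ˣ => (w : Module.End F K) 1) (hz (φ x))
        simp only [Units.val_mul, Module.End.mul_apply] at h1
        rw [hφ, hφ, mul_one] at h1
        rw [← h1, mul_comm]
    have hc0 : (z : Module.End F K) 1 ≠ 0 := by
      intro h0
      have h1 : (z : Module.End F K) * ((z⁻¹ : (Module.End F K)ˣ) : Module.End F K) = 1 :=
        z.mul_inv
      have h2 := congrArg (fun L : Module.End F K => L 1) h1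
      simp only [Module.End.mul_apply, Module.End.one_apply] at h2
      rw [hzx, h0, zero_mul] at h2
      exact zero_ne_one h2
    refine ⟨Units.mk0 _ hc0, Units.ext ?_, ?_⟩
    · apply LinearMap.ext
      intro x
      rw [hφ]
      exact hzx x
    · have h2 := congrArg (fun w : (Module.End F K)ˣ => (w : Module.End F K) 1) (hz Sunit)
      simp only [Units.val_mul, Module.End.mul_apply] at h2
      show ((z : Module.End F K) 1) ^ q = (z : Module.End F K) 1
      have hS1 : ((Sunit : (Module.End F K)ˣ) : Module.End F K) 1 = 1 := by
        show σL 1 = 1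
        rw [hσL, one_pow]
      rw [hS1] at h2
      have hL : ((Sunit : (Module.End F K)ˣ) : Module.End F K) ((z : Module.End F K) 1)
          = ((z : Module.End F K) 1) ^ q := hσL _
      rw [hL] at h2
      exact h2
  -- scalars are central
  have hcen : ∀ (u : Kˣ) (c : F), (u : K) = algebraMap F K c →
      φ u ∈ Subgroup.center (Module.End F K)ˣ := by
    intro u c hu
    rw [Subgroup.mem_center_iff]
    intro g
    apply Units.ext
    apply LinearMap.ext
    intro x
    simp only [Units.val_mul, Module.End.mul_apply]
    rw [hφ, hφ, hu, ← Algebra.smul_def, ← Algebra.smul_def, map_smul]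
  -- pass to the projective group
  set πu := QuotientGroup.mk' (Subgroup.center (Module.End F K)ˣ) with hπu
  set R' := πu (φ ζ) with hR'def
  set S' := πu Sunit with hS'def
  have hSS : Sunit * Sunit = 1 := Units.ext hσ2
  have hS'2 : S' * S' = 1 := by rw [hS'def, ← map_mul, hSS, map_one]
  have hζpow : ∀ k : ℕ, ((ζ ^ k : Kˣ) : K) = (ζ : K) ^ k := fun k => rfl
  have hq2pos : 1 ≤ q ^ 2 := Nat.one_le_pow _ _ (by omega)
  have hRpow : R' ^ (q + 1) = 1 := by
    rw [hR'def, ← map_pow, ← map_pow]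
    rw [hπu, QuotientGroup.mk'_apply, QuotientGroup.eq_one_iff]
    have hKu : (ζ : K) ^ (q ^ 2 - 1) = 1 := by
      have hu : (ζ : Kˣ) ^ (q ^ 2 - 1) = 1 := by
        rw [← hζord]; exact pow_orderOf_eq_one ζ
      simpa using congrArg Units.val hu
    have hz1 : ((ζ : K) ^ (q + 1)) ^ q = (ζ : K) ^ (q + 1) := by
      rw [← pow_mul]
      have e1 : (q + 1) * q = (q ^ 2 - 1) + (q + 1) := by
        calc (q + 1) * q = q ^ 2 + q := by ring
        _ = (q ^ 2 - 1 + 1) + q := by rw [Nat.sub_add_cancel hq2pos]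
        _ = (q ^ 2 - 1) + (q + 1) := by rw [add_assoc, add_comm 1 q]
      rw [e1, pow_add, hKu, one_mul]
    obtain ⟨c, hc⟩ := hfix _ hz1
    exact hcen (ζ ^ (q + 1)) c (by rw [hζpow, ← hc])
  have hmin : ∀ k : ℕ, R' ^ k = 1 → (q + 1) ∣ k := by
    intro k hk
    rw [hR'def, ← map_pow, ← map_pow, hπu, QuotientGroup.mk'_apply,
      QuotientGroup.eq_one_iff] at hk
    obtain ⟨c, hφc, hcq⟩ := hcenter _ hk
    have hval : (ζ : K) ^ k = (c : K) := by
      have h1 := congrArg (fun w : (Module.End F K)ˣ => (w : Module.End F K) 1) hφc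
      simp only [hφ, mul_one, hζpow] at h1
      exact h1
    have hu : ζ ^ (k * q) = ζ ^ k := by
      apply Units.ext
      rw [hζpow, hζpow, pow_mul, hval, hcq]
    rw [pow_eq_pow_iff_modEq, hζord] at hu
    have hdvd : (q ^ 2 - 1) ∣ k * q - k :=
      (Nat.modEq_iff_dvd' (Nat.le_mul_of_pos_right k (by omega))).mp hu.symm
    have e2 : k * q - k = k * (q - 1) := by
      rw [mul_tsub, mul_one]
    have e3 : q ^ 2 - 1 = (q + 1) * (q - 1) := by
      obtain ⟨m, rfl⟩ : ∃ m, q = m + 1 := ⟨q - 1, by omega⟩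
      have h4 : (m + 1) ^ 2 = m * m + 2 * m + 1 := by ring
      have h5 : (m + 1 + 1) * (m + 1 - 1) = m * m + 2 * m := by
        simp only [Nat.add_sub_cancel]
        ring
      rw [h4, h5]
      set t := m * m with ht
      omega
    rw [e2, e3] at hdvd
    exact (Nat.mul_dvd_mul_iff_right (show 0 < q - 1 by omega)).mp hdvd
  have hR'ord : orderOf R' = q + 1 :=
    Nat.dvd_antisymm (orderOf_dvd_of_pow_eq_one hRpow) (hmin _ (pow_orderOf_eq_one R'))
  -- the conjugation relation
  have hSRS : Sunit * φ ζ * Sunit = φ (ζ ^ q) := by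
    apply Units.ext
    apply LinearMap.ext
    intro x
    simp only [Units.val_mul, Module.End.mul_apply]
    rw [hφ, hφ]
    rw [show ((Sunit : (Module.End F K)ˣ) : Module.End F K) x = x ^ q from hσL x,
      show ∀ y : K, ((Sunit : (Module.End F K)ˣ) : Module.End F K) y = y ^ q from hσL]
    rw [mul_pow, hqq, hζpow]
  have hconj : S' * R' * S' = R'⁻¹ := by
    have h1 : S' * R' * S' = πu (Sunit * φ ζ * Sunit) := by
      rw [hS'def, hR'def, map_mul, map_mul]
    rw [h1, hSRS]
    have h2 : πu (φ (ζ ^ q)) = R' ^ q := by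
      rw [hR'def, ← map_pow, ← map_pow]
    rw [h2]
    have h3 : R' ^ q * R' = 1 := by
      rw [← pow_succ, hRpow]
    exact eq_inv_of_mul_eq_one_left h3
  -- S' is not a power of R'
  have hnot : ∀ k : ℕ, S' ≠ R' ^ k := by
    intro k hk
    rw [hS'def, hR'def, ← map_pow, ← map_pow, hπu, QuotientGroup.mk'_eq_mk'] at hk
    obtain ⟨z, hzc, hz⟩ := hk
    obtain ⟨c, rfl, hcq⟩ := hcenter z hzc
    have hσφ : Sunit = φ (ζ ^ k * c⁻¹) := by
      rw [map_mul, ← hz, map_inv, mul_assoc, mul_inv_cancel _, mul_one]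
    have h1 := congrArg (fun w : (Module.End F K)ˣ => (w : Module.End F K) 1) hσφ
    simp only [hφ, mul_one] at h1
    have hS1 : ((Sunit : (Module.End F K)ˣ) : Module.End F K) 1 = 1 := by
      show σL 1 = 1
      rw [hσL, one_pow]
    rw [hS1] at h1
    have hu1 : (ζ ^ k * c⁻¹ : Kˣ) = 1 := Units.ext h1.symm
    rw [hu1, map_one] at hσφ
    have hall : ∀ x : K, x ^ q = x := by
      intro x
      have h2 := congrArg (fun w : (Module.End F K)ˣ => (w : Module.End F K) x) hσφ
      simp only [Units.val_one, Module.End.one_apply] at h2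
      rw [show ((Sunit : (Module.End F K)ˣ) : Module.End F K) x = x ^ q from hσL x] at h2
      exact h2
    have hsurj : Function.Surjective (algebraMap F K) := fun x => hfix x (hall x)
    have hle := Fintype.card_le_of_surjective _ hsurj
    rw [hF, hcardK, pow_two] at hle
    nlinarith
  -- assemble
  obtain ⟨H0, ⟨iso0⟩⟩ := exists_dihedral_subgroup (n := q + 1) (by omega) R' S'
    hR'ord hS'2 hconj hnot
  let geq : (Module.End F K)ˣ ≃* Matrix.GeneralLinearGroup (Fin 2) F :=
    Units.mapEquiv (algEquivMatrix b).toMulEquiv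
  let Piso := QuotientGroup.congr (Subgroup.center (Module.End F K)ˣ)
    (Subgroup.center (Matrix.GeneralLinearGroup (Fin 2) F)) geq (center_map_equiv geq)
  exact ⟨H0.map Piso.toMonoidHom, ⟨((Piso.subgroupMap H0).symm.trans iso0)⟩⟩
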